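/- Let (X,d) be a metric space, R a finitely semi-recurrent, non-identical relation on X, and T : X → X an R-semi-progressive, R-increasing selfmap which is (d,R;G,(ψ,φ))-contractive for some G ∈ 𝒢 and some pair (ψ,φ) of weak generalized altering functions in F(ℝ₊). If X is (a-o,d)-complete and T is (a-o,d)-continuous, then T is a globally strong Picard operator (modulo (d,R)): for each x ∈ X(T,R) the sequence (Tⁿx) converges to a fixed point of T, and any two fixed points z₁, z₂ of T with z₁ R z₂ coincide. -/

import Mathlib

open Filter Topology

namespace Paper

variable {X : Type*} [MetricSpace X]

/-- `A₁(x,y) = d(x,y)`. -/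
noncomputable def A1 (T : X → X) (x y : X) : ℝ := dist x y

/-- `A₂(x,y) = (1/2)[d(x,Tx) + d(y,Ty)]`. -/
noncomputable def A2 (T : X → X) (x y : X) : ℝ := (dist x (T x) + dist y (T y)) / 2

/-- `A₃(x,y) = max{d(x,Tx), d(y,Ty)}`. -/
noncomputable def A3 (T : X → X) (x y : X) : ℝ := max (dist x (T x)) (dist y (T y))

/-- `A₄(x,y) = (1/2)[d(x,Ty) + d(Tx,y)]`. -/
noncomputable def A4 (T : X → X) (x y : X) : ℝ := (dist x (T y) + dist (T x) y) / 2

/-- `B₁(x,y) = diam{x, Tx, y, Ty}`. -/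
noncomputable def B1 (T : X → X) (x y : X) : ℝ := Metric.diam ({x, T x, y, T y} : Set X)

noncomputable def B2 (T : X → X) (x y : X) : ℝ := max (A1 T x y) (A2 T x y)
noncomputable def B3 (T : X → X) (x y : X) : ℝ := max (A1 T x y) (A3 T x y)
noncomputable def B4 (T : X → X) (x y : X) : ℝ := max (A1 T x y) (A4 T x y)
noncomputable def C1 (T : X → X) (x y : X) : ℝ := max (A1 T x y) (max (A2 T x y) (A4 T x y))
noncomputable def C2 (T : X → X) (x y : X) : ℝ := max (A1 T x y) (max (A3 T x y) (A4 T x y))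

/-- The class `𝒢 = {A₁, B₂, B₃, B₄, C₁, C₂}`. -/
noncomputable def calG (T : X → X) : Set (X → X → ℝ) :=
  {A1 T, B2 T, B3 T, B4 T, C1 T, C2 T}

/-- The class `𝒢₁ = {A₁, B₂, B₄, C₁}`. -/
noncomputable def calG1 (T : X → X) : Set (X → X → ℝ) :=
  {A1 T, B2 T, B4 T, C1 T}

/-- `T` is strictly `(d,R;G)`-nonexpansive: `x R̃ y` implies `d(Tx,Ty) < G(x,y)`. -/
def StrictlyNonexpansive (R : X → X → Prop) (T : X → X) (G : X → X → ℝ) : Prop :=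
  ∀ x y, R x y → x ≠ y → dist (T x) (T y) < G x y

/-- `T` is Meir-Keeler `(d,R;G)`-contractive. -/
def MeirKeelerContractive (R : X → X → Prop) (T : X → X) (G : X → X → ℝ) : Prop :=
  StrictlyNonexpansive R T G ∧
  ∀ ε : ℝ, 0 < ε → ∃ δ : ℝ, 0 < δ ∧
    ∀ x y, R x y → x ≠ y → ε < G x y → G x y < ε + δ → dist (T x) (T y) ≤ ε

/-- `φ ∈ F(re)(ℝ₊)`: `φ : ℝ₊ → ℝ₊` with `φ(0) = 0` and `φ(t) < t` for `t > 0`. -/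
def Regressive (φ : ℝ → ℝ) : Prop :=
  φ 0 = 0 ∧ (∀ t, 0 ≤ t → 0 ≤ φ t) ∧ (∀ t, 0 < t → φ t < t)

/-- `φ` is Meir-Keeler admissible. -/
def MKAdmissible (φ : ℝ → ℝ) : Prop :=
  ∀ γ : ℝ, 0 < γ → ∃ β : ℝ, 0 < β ∧ β < γ ∧ ∀ t, γ ≤ t → t < γ + β → φ t ≤ γ

/-- `T` is `(d,R;G,φ)`-contractive. -/
def PhiContractive (R : X → X → Prop) (T : X → X) (G : X → X → ℝ) (φ : ℝ → ℝ) : Prop :=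
  ∀ x y, R x y → x ≠ y → dist (T x) (T y) ≤ φ (G x y)

/-- `(ψ,φ)` is a pair of weak generalized altering functions in `F(ℝ₊)`. -/
def WeakAlteringPair (ψ φ : ℝ → ℝ) : Prop :=
  (∀ s t, 0 ≤ s → s ≤ t → ψ s ≤ ψ t) ∧
  (∀ t, 0 ≤ t → 0 ≤ ψ t) ∧ (∀ t, 0 ≤ t → 0 ≤ φ t) ∧
  φ 0 = 0 ∧
  (∀ ε : ℝ, 0 < ε → ψ ε - Function.leftLim ψ ε < φ ε) ∧
  (∀ ε : ℝ, 0 < ε → ∀ t : ℕ → ℝ,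
    Tendsto t atTop (nhds ε) → (∀ᶠ n in atTop, ε < t n) →
    Function.rightLim ψ ε - ψ ε < Filter.limsup (fun n => φ (t n)) atTop)

/-- `T` is `(d,R;G,(ψ,φ))`-contractive. -/
def PsiPhiContractive (R : X → X → Prop) (T : X → X) (G : X → X → ℝ) (ψ φ : ℝ → ℝ) : Prop :=
  ∀ x y, R x y → x ≠ y → ψ (dist (T x) (T y)) ≤ ψ (G x y) - φ (G x y)

/-- `(z_n)` is `R`-ascending. -/
def Ascending (R : X → X → Prop) (z : ℕ → X) : Prop := ∀ n, R (z n) (z (n + 1))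

/-- `(z_n)` is `T`-orbital: a subsequence of `(Tⁿ x)` for some `x`. -/
def Orbital (T : X → X) (z : ℕ → X) : Prop :=
  ∃ x : X, ∃ i : ℕ → ℕ, Tendsto i atTop atTop ∧ ∀ n, z n = T^[i n] x

/-- `X` is `(a-o,d)`-complete. -/
def AOComplete (R : X → X → Prop) (T : X → X) : Prop :=
  ∀ z : ℕ → X, Ascending R z → Orbital T z → CauchySeq z → ∃ l, Tendsto z atTop (nhds l)

/-- `T` is `(a-o,d)`-continuous. -/
def AOContinuous (R : X → X → Prop) (T : X → X) : Prop :=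
  ∀ z : ℕ → X, ∀ l : X, Ascending R z → Orbital T z → Tendsto z atTop (nhds l) →
    Tendsto (fun n => T (z n)) atTop (nhds (T l))

/-- `R` is `(a-o,d)`-almost-selfclosed. -/
def AlmostSelfClosed (R : X → X → Prop) (T : X → X) : Prop :=
  ∀ z : ℕ → X, ∀ l : X, Ascending R z → Orbital T z → Tendsto z atTop (nhds l) →
    ∃ i : ℕ → ℕ, Tendsto i atTop atTop ∧ ∀ n, R (z (i n)) l

/-- the spectrum `spec(x) = {i ≥ 1 : x R Tⁱx}`. -/
def spec (R : X → X → Prop) (T : X → X) (x : X) : Set ℕ := {i | 1 ≤ i ∧ R x (T^[i] x)}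

/-- `R` is `k`-semi-recurrent at `x`. -/
def SemiRecurrentAt (R : X → X → Prop) (T : X → X) (x : X) (k : ℕ) : Prop :=
  ∀ n : ℕ, 1 ≤ n → ∃ q ∈ spec R T x, q ≤ n ∧ n < q + k

/-- `x` is orbital admissible. -/
def OrbAdmissible (T : X → X) (x : X) : Prop :=
  ∀ i j : ℕ, i ≠ j → T^[i] x ≠ T^[j] x

/-- `R` is finitely semi-recurrent. -/
def FinSemiRecurrent (R : X → X → Prop) (T : X → X) : Prop :=
  ∀ x : X, R x (T x) → OrbAdmissible T x → ∃ k : ℕ, 1 ≤ k ∧ SemiRecurrentAt R T x k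

/-! ### Auxiliary lemmas -/

section Aux

variable {T : X → X} {G : X → X → ℝ}

lemma calG_lb (hG : G ∈ calG T) (x y : X) : dist x y ≤ G x y := by
  simp only [calG, Set.mem_insert_iff, Set.mem_singleton_iff] at hG
  rcases hG with rfl | rfl | rfl | rfl | rfl | rfl <;>
    simp only [A1, B2, B3, B4, C1, C2] <;>
    first
      | exact le_rfl
      | exact le_max_left _ _

lemma calG_ub (hG : G ∈ calG T) (x y : X) :
    G x y ≤ dist x y + (dist x (T x) + dist y (T y)) := by
  have hxy : (0:ℝ) ≤ dist x y := dist_nonneg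
  have hx : (0:ℝ) ≤ dist x (T x) := dist_nonneg
  have hy : (0:ℝ) ≤ dist y (T y) := dist_nonneg
  have h1 : A1 T x y ≤ dist x y + (dist x (T x) + dist y (T y)) := by
    simp only [A1]; linarith
  have h2 : A2 T x y ≤ dist x y + (dist x (T x) + dist y (T y)) := by
    simp only [A2]; linarith
  have h3 : A3 T x y ≤ dist x y + (dist x (T x) + dist y (T y)) := by
    simp only [A3]; exact max_le (by linarith) (by linarith)
  have h4 : A4 T x y ≤ dist x y + (dist x (T x) + dist y (T y)) := by
    simp only [A4]
    have t1 : dist x (T y) ≤ dist x y + dist y (T y) := dist_triangle _ _ _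
    have t2 : dist (T x) y ≤ dist (T x) x + dist x y := dist_triangle _ _ _
    have t3 : dist (T x) x = dist x (T x) := dist_comm _ _
    linarith
  simp only [calG, Set.mem_insert_iff, Set.mem_singleton_iff] at hG
  rcases hG with rfl | rfl | rfl | rfl | rfl | rfl
  · exact h1
  · exact max_le h1 h2
  · exact max_le h1 h3
  · exact max_le h1 h4
  · exact max_le h1 (max_le h2 h4)
  · exact max_le h1 (max_le h3 h4)

lemma calG_cons (hG : G ∈ calG T) (x : X) :
    G x (T x) ≤ max (dist x (T x)) (dist (T x) (T (T x))) := by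
  have hma : dist x (T x) ≤ max (dist x (T x)) (dist (T x) (T (T x))) := le_max_left _ _
  have hmb : dist (T x) (T (T x)) ≤ max (dist x (T x)) (dist (T x) (T (T x))) := le_max_right _ _
  have h1 : A1 T x (T x) ≤ max (dist x (T x)) (dist (T x) (T (T x))) := hma
  have h2 : A2 T x (T x) ≤ max (dist x (T x)) (dist (T x) (T (T x))) := by
    simp only [A2]; linarith
  have h3 : A3 T x (T x) ≤ max (dist x (T x)) (dist (T x) (T (T x))) := le_rfl
  have h4 : A4 T x (T x) ≤ max (dist x (T x)) (dist (T x) (T (T x))) := by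
    simp only [A4, dist_self]
    have t1 : dist x (T (T x)) ≤ dist x (T x) + dist (T x) (T (T x)) := dist_triangle _ _ _
    linarith
  simp only [calG, Set.mem_insert_iff, Set.mem_singleton_iff] at hG
  rcases hG with rfl | rfl | rfl | rfl | rfl | rfl
  · exact h1
  · exact max_le h1 h2
  · exact max_le h1 h3
  · exact max_le h1 h4
  · exact max_le h1 (max_le h2 h4)
  · exact max_le h1 (max_le h3 h4)

lemma WeakAlteringPair.phi_pos {ψ φ : ℝ → ℝ} (hpair : WeakAlteringPair ψ φ)
    {ε : ℝ} (hε : 0 < ε) : 0 < φ ε := by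
  obtain ⟨hmono, hψ0, hφ0, hφz, hleft, -⟩ := hpair
  have key : Function.leftLim ψ ε ≤ ψ ε := by
    set Ψ : ℝ → ℝ := fun s => ψ (max s 0) with hΨdef
    have hΨmono : Monotone Ψ := fun a b hab => hmono _ _ (le_max_right _ _) (max_le_max hab le_rfl)
    have heq : Function.leftLim ψ ε = Function.leftLim Ψ ε := by
      refine leftLim_eq_of_tendsto ?_
      · refine (hΨmono.tendsto_leftLim ε).congr' ?_
        filter_upwards [Ioo_mem_nhdsLT_of_mem (Set.mem_Ioc.mpr ⟨hε, le_rfl⟩)] with s hs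
        simp [hΨdef, max_eq_left hs.1.le]
    rw [heq]
    have h2 := hΨmono.leftLim_le (le_refl ε)
    simpa [hΨdef, max_eq_left hε.le] using h2
  have := hleft ε hε
  linarith

lemma mk_of_psiPhi {R : X → X → Prop} {T : X → X} {G : X → X → ℝ} (hG : G ∈ calG T)
    {ψ φ : ℝ → ℝ} (hpair : WeakAlteringPair ψ φ)
    (hcontr : PsiPhiContractive R T G ψ φ) :
    MeirKeelerContractive R T G := by
  obtain ⟨hmono, hψ0, hφ0, hφz, hleft, hright⟩ := hpair
  have hphi : ∀ ε : ℝ, 0 < ε → 0 < φ ε :=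
    fun ε hε => WeakAlteringPair.phi_pos ⟨hmono, hψ0, hφ0, hφz, hleft, hright⟩ hε
  constructor
  · intro x y hR hne
    have hd : (0:ℝ) < dist x y := dist_pos.2 hne
    have hGpos : 0 < G x y := lt_of_lt_of_le hd (calG_lb hG x y)
    by_contra hcon
    push_neg at hcon
    have h1 := hcontr x y hR hne
    have h2 : ψ (G x y) ≤ ψ (dist (T x) (T y)) := hmono _ _ hGpos.le hcon
    linarith [hphi _ hGpos]
  · intro ε hε
    by_contra hcon
    push_neg at hcon
    choose u v hRuv hne ht1 ht2 hd using fun n : ℕ => hcon (1 / ((n : ℝ) + 1)) (by positivity)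
    set t : ℕ → ℝ := fun n => G (u n) (v n) with htdef
    have htlim : Tendsto t atTop (𝓝 ε) := by
      have h1 : Tendsto (fun n : ℕ => ε + 1 / ((n:ℝ) + 1)) atTop (𝓝 ε) := by
        simpa using tendsto_const_nhds.add (tendsto_one_div_add_atTop_nhds_zero_nat (𝕜 := ℝ))
      exact tendsto_of_tendsto_of_tendsto_of_le_of_le tendsto_const_nhds h1
        (fun n => (ht1 n).le) (fun n => (ht2 n).le)
    have hls := hright ε hε t htlim (Eventually.of_forall ht1)
    set Ψ : ℝ → ℝ := fun s => ψ (max s 0) with hΨdef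
    have hΨmono : Monotone Ψ := fun a b hab => hmono _ _ (le_max_right _ _) (max_le_max hab le_rfl)
    have hΨψ : ∀ s : ℝ, 0 ≤ s → Ψ s = ψ s := fun s hs => by simp [hΨdef, max_eq_left hs]
    have hten : Tendsto ψ (𝓝[>] ε) (𝓝 (Function.rightLim Ψ ε)) := by
      refine (hΨmono.tendsto_rightLim ε).congr' ?_
      filter_upwards [self_mem_nhdsWithin] with s hs
      exact hΨψ s (hε.trans hs).le
    have hRLeq : Function.rightLim ψ ε = Function.rightLim Ψ ε :=
      rightLim_eq_of_tendsto hten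
    have hten' : Tendsto ψ (𝓝[>] ε) (𝓝 (Function.rightLim ψ ε)) := by
      rw [hRLeq]; exact hten
    have hεRL : ψ ε ≤ Function.rightLim ψ ε := by
      rw [hRLeq, ← hΨψ ε hε.le]; exact hΨmono.le_rightLim le_rfl
    have hRLle : ∀ s : ℝ, ε < s → Function.rightLim ψ ε ≤ ψ s := by
      intro s hs; rw [hRLeq, ← hΨψ s (hε.trans hs).le]; exact hΨmono.rightLim_le hs
    have hphit : ∀ n, φ (t n) ≤ ψ (t n) - Function.rightLim ψ ε := by
      intro n
      have h1 := hcontr (u n) (v n) (hRuv n) (hne n)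
      have h2 := hRLle _ (hd n)
      linarith
    have hcob : Filter.IsCoboundedUnder (· ≤ ·) atTop (fun n => φ (t n)) :=
      Filter.isCoboundedUnder_le_of_le atTop (x := 0)
        (fun n => hφ0 _ (le_of_lt (lt_trans hε (ht1 n))))
    have hub : ∀ c : ℝ, ε < c →
        Filter.limsup (fun n => φ (t n)) atTop ≤ ψ c - Function.rightLim ψ ε := by
      intro c hc
      apply Filter.limsup_le_of_le hcob
      have hev : ∀ᶠ n in atTop, t n < c := htlim.eventually_lt_const hc
      filter_upwards [hev] with n hn
      have h3 : ψ (t n) ≤ ψ c := hmono _ _ (le_of_lt (lt_trans hε (ht1 n))) hn.le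
      linarith [hphit n]
    have hL0 : Filter.limsup (fun n => φ (t n)) atTop ≤ 0 := by
      refine le_of_forall_pos_le_add ?_
      intro η hη
      have hev : ∀ᶠ s in 𝓝[>] ε, ψ s < Function.rightLim ψ ε + η :=
        hten'.eventually_lt_const (by linarith)
      obtain ⟨c, hc1, hc2⟩ := (hev.and self_mem_nhdsWithin).exists
      have := hub c hc2
      linarith
    have h0 : 0 ≤ Function.rightLim ψ ε - ψ ε := by linarith
    linarith

lemma picard_of_MK {R : X → X → Prop} {T : X → X} {G : X → X → ℝ}
    (hfsr : FinSemiRecurrent R T)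
    (hinc : ∀ x y : X, R x y → R (T x) (T y))
    (hcomp : AOComplete R T) (hG : G ∈ calG T)
    (hmk : MeirKeelerContractive R T G)
    (hcont : AOContinuous R T) :
    ∀ x : X, R x (T x) →
      ∃ z : X, T z = z ∧ Tendsto (fun n => T^[n] x) atTop (nhds z) := by
  intro x hx
  set w : ℕ → X := fun n => T^[n] x with hw
  have hz0 : w 0 = x := rfl
  have hzs : ∀ n, w (n + 1) = T (w n) := fun n => Function.iterate_succ_apply' T n x
  by_cases hper : ∃ n, T (w n) = w n
  · obtain ⟨n, hn⟩ := hper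
    refine ⟨w n, hn, ?_⟩
    have key : ∀ p, w (n + p) = w n := by
      intro p
      induction p with
      | zero => rfl
      | succ p ih =>
        show w ((n + p) + 1) = w n
        rw [hzs (n + p), ih, hn]
    refine tendsto_atTop_of_eventually_const (i₀ := n) ?_
    intro i hi
    have h := key (i - n)
    rwa [show n + (i - n) = i from by omega] at h
  · push_neg at hper
    have hne : ∀ n, w n ≠ w (n + 1) := by
      intro n h
      exact hper n (by rw [hzs n] at h; exact h.symm)
    set ρ : ℕ → ℝ := fun n => dist (w n) (w (n + 1)) with hρdef
    have hρpos : ∀ n, 0 < ρ n := fun n => dist_pos.2 (hne n)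
    have hasc : Ascending R w := by
      intro n
      induction n with
      | zero => rw [hzs 0, hz0]; exact hx
      | succ n ih =>
        have h := hinc _ _ ih
        rw [← hzs n, ← hzs (n + 1)] at h
        exact h
    have hGub_cons : ∀ n, G (w n) (w (n + 1)) ≤ max (ρ n) (ρ (n + 1)) := by
      intro n
      have h := calG_cons hG (w n)
      rw [← hzs n, ← hzs (n + 1)] at h
      exact h
    have hdec : ∀ n, ρ (n + 1) < ρ n := by
      intro n
      have h1 := hmk.1 (w n) (w (n + 1)) (hasc n) (hne n)
      rw [← hzs n, ← hzs (n + 1)] at h1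
      have h3 : ρ (n + 1) < max (ρ n) (ρ (n + 1)) := lt_of_lt_of_le h1 (hGub_cons n)
      by_contra hcon
      push_neg at hcon
      rw [max_eq_right hcon] at h3
      exact lt_irrefl _ h3
    have hanti : StrictAnti ρ := strictAnti_nat_of_succ_lt hdec
    have hadm : OrbAdmissible T x := by
      intro i j hij h
      wlog hlt : i < j generalizing i j
      · exact this j i hij.symm h.symm (by omega)
      have h2 : w i = w j := h
      have h' : w (i + 1) = w (j + 1) := by rw [hzs i, hzs j, h2]
      have heq : ρ i = ρ j := by simp only [hρdef]; rw [h2, h']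
      exact absurd heq (ne_of_gt (hanti hlt))
    obtain ⟨k, hk1, hsrec⟩ := hfsr x hx hadm
    have hbdd : BddBelow (Set.range ρ) := ⟨0, by rintro r ⟨n, rfl⟩; exact dist_nonneg⟩
    have htinf : Tendsto ρ atTop (𝓝 (⨅ n, ρ n)) := tendsto_atTop_ciInf hanti.antitone hbdd
    have hLnn : 0 ≤ ⨅ n, ρ n := le_ciInf fun n => dist_nonneg
    have hLlt : ∀ n, (⨅ n, ρ n) < ρ n :=
      fun n => lt_of_le_of_lt (ciInf_le hbdd (n + 1)) (hdec n)
    have hL0 : (⨅ n, ρ n) = 0 := by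
      by_contra hL0
      have hLpos : 0 < ⨅ n, ρ n := lt_of_le_of_ne hLnn (Ne.symm hL0)
      obtain ⟨δ, hδ, hmk2⟩ := hmk.2 _ hLpos
      obtain ⟨n, hn⟩ := (htinf.eventually_lt_const (by linarith : (⨅ n, ρ n) < (⨅ n, ρ n) + δ)).exists
      have hG1 : (⨅ n, ρ n) < G (w n) (w (n + 1)) :=
        lt_of_lt_of_le (hLlt n) (calG_lb hG (w n) (w (n + 1)))
      have hG2 : G (w n) (w (n + 1)) < (⨅ n, ρ n) + δ := by
        refine lt_of_le_of_lt (hGub_cons n) ?_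
        rw [max_eq_left (le_of_lt (hdec n))]
        exact hn
      have h := hmk2 (w n) (w (n + 1)) (hasc n) (hne n) hG1 hG2
      rw [← hzs n, ← hzs (n + 1)] at h
      exact absurd h (not_le.2 (hLlt (n + 1)))
    rw [hL0] at htinf
    have hRq : ∀ q, q ∈ spec R T x → ∀ m, R (w m) (w (m + q)) := by
      intro q hq m
      induction m with
      | zero => simp only [Nat.zero_add]; exact hq.2
      | succ m ih =>
        have h := hinc _ _ ih
        rw [← hzs m, ← hzs (m + q)] at h
        rwa [show m + 1 + q = m + q + 1 from by omega]
    have hblock : ∀ (N : ℕ) (β : ℝ), (∀ n, N ≤ n → ρ n ≤ β) →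
        ∀ a p, N ≤ a → dist (w a) (w (a + p)) ≤ (p : ℝ) * β := by
      intro N β hβ a p ha
      induction p with
      | zero => simp
      | succ p ih =>
        have hcast : ((p + 1 : ℕ) : ℝ) * β = (p : ℝ) * β + β := by push_cast; ring
        show dist (w a) (w (a + (p + 1))) ≤ ((p + 1 : ℕ) : ℝ) * β
        rw [show a + (p + 1) = (a + p) + 1 from by omega, hcast]
        have htri := dist_triangle (w a) (w (a + p)) (w ((a + p) + 1))
        have hr : dist (w (a + p)) (w ((a + p) + 1)) = ρ (a + p) := rfl
        have := hβ (a + p) (le_trans ha (Nat.le_add_right a p))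
        linarith
    have hcauchy : CauchySeq w := by
      rw [Metric.cauchySeq_iff']
      intro ε hε
      have hε0 : 0 < ε / 4 := by linarith
      obtain ⟨δ, hδ, hmk2⟩ := hmk.2 (ε / 4) hε0
      set δ' := min δ (ε / 4) with hδ'def
      have hδ'pos : 0 < δ' := lt_min hδ hε0
      have hδ'le : δ' ≤ δ := min_le_left _ _
      have hδ'le2 : δ' ≤ ε / 4 := min_le_right _ _
      have hk1R : (1 : ℝ) ≤ (k : ℝ) := by exact_mod_cast hk1
      have hkpos : (0 : ℝ) < 4 * ((k : ℝ) + 1) := by positivity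
      have hkne : ((k : ℝ) + 1) ≠ 0 := by positivity
      set β := δ' / (4 * ((k : ℝ) + 1)) with hβdef
      have hβpos : 0 < β := div_pos hδ'pos hkpos
      have hβδ' : β ≤ δ' := div_le_self hδ'pos.le (by linarith)
      obtain ⟨N, hN⟩ := Filter.eventually_atTop.1 (htinf.eventually_lt_const hβpos)
      have hρβ : ∀ n, N ≤ n → ρ n ≤ β := fun n hn => (hN n hn).le
      have hstep := hblock N β hρβ
      have hfin : ((k : ℝ) + 1) * β = δ' / 4 := by
        rw [hβdef]; field_simp
      have key : ∀ j, ∀ m, N ≤ m → dist (w m) (w (m + j)) < ε / 4 + δ' / 2 := by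
        intro j
        induction j with
        | zero => intro m _; simp only [Nat.add_zero, dist_self]; linarith
        | succ j ih =>
          intro m hm
          rcases Nat.eq_zero_or_pos j with rfl | hj
          · have h := hN m hm
            have hr : dist (w m) (w (m + (0 + 1))) = ρ m := rfl
            rw [hr]
            linarith
          · obtain ⟨q, hqspec, hqle, hqlt⟩ := hsrec j hj
            have hq1 : 1 ≤ q := hqspec.1
            have hRmq : R (w m) (w (m + q)) := hRq q hqspec m
            have hnem : w m ≠ w (m + q) := hadm m (m + q) (by omega)
            have hmq : N ≤ m + q := le_trans hm (Nat.le_add_right m q)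
            have hqj : ((j - q : ℕ) : ℝ) ≤ (k : ℝ) := by
              have : j - q ≤ k := by omega
              exact_mod_cast this
            have hjqβ : ((j - q : ℕ) : ℝ) * β ≤ (k : ℝ) * β :=
              mul_le_mul_of_nonneg_right hqj hβpos.le
            have h3 : dist (w (m + j)) (w (m + q)) ≤ ((j - q : ℕ) : ℝ) * β := by
              rw [dist_comm]
              have e : m + j = (m + q) + (j - q) := by omega
              rw [e]
              exact hstep (m + q) (j - q) hmq
            have hD : dist (w m) (w (m + q)) < (ε / 4 + δ' / 2) + (k : ℝ) * β := by
              have htri := dist_triangle (w m) (w (m + j)) (w (m + q))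
              linarith [ih m hm]
            have hGb : G (w m) (w (m + q)) ≤ dist (w m) (w (m + q)) + (ρ m + ρ (m + q)) := by
              have h := calG_ub hG (w m) (w (m + q))
              rw [← hzs m, ← hzs (m + q)] at h
              exact h
            have hρm : ρ m ≤ β := hρβ m hm
            have hρmq : ρ (m + q) ≤ β := hρβ _ hmq
            have hkb : ((k : ℝ) + 2) * β ≤ δ' / 2 := by
              have h1 : ((k : ℝ) + 2) ≤ 2 * ((k : ℝ) + 1) := by linarith
              calc ((k : ℝ) + 2) * β ≤ (2 * ((k : ℝ) + 1)) * β :=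
                    mul_le_mul_of_nonneg_right h1 hβpos.le
                _ = δ' / 2 := by rw [hβdef]; field_simp; ring
            have hexp : ((k : ℝ) + 2) * β = (k : ℝ) * β + 2 * β := by ring
            have hGtot : G (w m) (w (m + q)) < ε / 4 + δ := by
              linarith
            have hmid : dist (w (m + 1)) (w (m + q + 1)) ≤ ε / 4 := by
              by_cases hcase : G (w m) (w (m + q)) ≤ ε / 4
              · have h := hmk.1 (w m) (w (m + q)) hRmq hnem
                rw [← hzs m, ← hzs (m + q)] at h
                exact le_trans h.le hcase
              · push_neg at hcase
                have h := hmk2 (w m) (w (m + q)) hRmq hnem hcase hGtot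
                rw [← hzs m, ← hzs (m + q)] at h
                exact h
            have h4 : dist (w (m + q + 1)) (w (m + (j + 1))) ≤ ((j - q : ℕ) : ℝ) * β := by
              have e : m + (j + 1) = (m + q + 1) + (j - q) := by omega
              rw [e]
              exact hstep (m + q + 1) (j - q) (by omega)
            have htri := dist_triangle4 (w m) (w (m + 1)) (w (m + q + 1)) (w (m + (j + 1)))
            have e1 : dist (w m) (w (m + 1)) = ρ m := rfl
            have hexp2 : ((k : ℝ) + 1) * β = (k : ℝ) * β + β := by ring
            linarith
      refine ⟨N, fun n hn => ?_⟩
      have h := key (n - N) N le_rfl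
      rw [show N + (n - N) = n from by omega] at h
      rw [dist_comm]
      linarith
    have horb : Orbital T w := ⟨x, id, tendsto_id, fun n => rfl⟩
    obtain ⟨l, hl⟩ := hcomp w hasc horb hcauchy
    have hTl := hcont w l hasc horb hl
    have hshift : Tendsto (fun n => w (n + 1)) atTop (𝓝 l) :=
      hl.comp (tendsto_add_atTop_nat 1)
    have hTeq : (fun n => T (w n)) = fun n => w (n + 1) := funext fun n => (hzs n).symm
    rw [hTeq] at hTl
    exact ⟨l, tendsto_nhds_unique hTl hshift, hl⟩

end Aux

/-- Theorem 5, alternative (k1): `T` `(d,R;G,(ψ,φ))`-contractive for a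
pair of weak generalized altering functions, `X` `(a-o,d)`-complete,
`T` `(a-o,d)`-continuous. -/
theorem globally_strong_picard_psiPhi_continuous {X : Type*} [MetricSpace X]
    (R : X → X → Prop) (T : X → X)
    (hni : ∃ x y : X, R x y ∧ x ≠ y)
    (hfsr : FinSemiRecurrent R T)
    (hsp : ∃ x : X, R x (T x))
    (hinc : ∀ x y : X, R x y → R (T x) (T y))
    (hcomp : AOComplete R T)
    (G : X → X → ℝ) (hG : G ∈ calG T)
    (ψ φ : ℝ → ℝ) (hpair : WeakAlteringPair ψ φ)
    (hcontr : PsiPhiContractive R T G ψ φ)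
    (hcont : AOContinuous R T) :
    (∀ x : X, R x (T x) →
      ∃ z : X, T z = z ∧ Tendsto (fun n => T^[n] x) atTop (nhds z)) ∧
    (∀ z₁ z₂ : X, T z₁ = z₁ → T z₂ = z₂ → R z₁ z₂ → z₁ = z₂) := by
  have hmk : MeirKeelerContractive R T G := mk_of_psiPhi hG hpair hcontr
  constructor
  · exact picard_of_MK hfsr hinc hcomp hG hmk hcont
  · intro z₁ z₂ h1 h2 hR12
    by_contra hne
    have hd : 0 < dist z₁ z₂ := dist_pos.2 hne
    have hGd : G z₁ z₂ = dist z₁ z₂ := by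
      refine le_antisymm ?_ (calG_lb hG z₁ z₂)
      have h := calG_ub hG z₁ z₂
      rw [h1, h2] at h
      simpa using h
    have h := hcontr z₁ z₂ hR12 hne
    rw [h1, h2, hGd] at h
    have hφpos := hpair.phi_pos hd
    linarith

end Paper
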